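/- Assume P(T_1 < T_2, T_1 < Tmax, T_1 < min(D_1, D_2)) > 0. For n ≥ 2 define the time-dependent concordance Ĉ_n = [Σ_{1≤i≠j≤n} 1{T_i < D_i}·1{S(T_i;Z_i) < S(T_i;Z_j)}·1{T_i < X_j}·1{T_i < Tmax}] / [Σ_{1≤i≠j≤n} 1{T_i < D_i}·1{T_i < X_j}·1{T_i < Tmax}]. Then, as n → ∞, Ĉ_n converges almost surely to P(S(T_1;Z_1) < S(T_1;Z_2), T_1 < T_2, T_1 < Tmax, T_1 < min(D_1,D_2)) / P(T_1 < T_2, T_1 < Tmax, T_1 < min(D_1,D_2)). -/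

import Mathlib

open MeasureTheory ProbabilityTheory Filter
open scoped Classical


lemma aux_sqrt_tendsto : Tendsto Nat.sqrt atTop atTop := by
  apply tendsto_atTop_atTop.2
  intro N
  exact ⟨N * N, fun n hn => Nat.le_sqrt.2 hn⟩

lemma aux_ratio_tendsto : Tendsto (fun k : ℕ => (((k:ℝ)/((k:ℝ)+1))^2)^2) atTop (nhds 1) := by
  have h := (tendsto_natCast_div_add_atTop (1 : ℝ)).pow 2 |>.pow 2
  simpa using h

lemma aux_sandwich (a : ℕ → ℝ) (ha : Monotone a) (h0 : ∀ n, 0 ≤ a n) (μ : ℝ)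
    (hsq : Tendsto (fun k : ℕ => a (k ^ 2) / ((k:ℝ) ^ 2) ^ 2) atTop (nhds μ)) :
    Tendsto (fun n : ℕ => a n / ((n:ℝ) ^ 2)) atTop (nhds μ) := by
  have hL : Tendsto (fun k : ℕ => a (k ^ 2) / (((k:ℝ) + 1) ^ 2) ^ 2) atTop (nhds μ) := by
    have h2 := hsq.mul aux_ratio_tendsto
    rw [mul_one] at h2
    apply h2.congr'
    filter_upwards [eventually_ge_atTop 1] with k hk
    have hk0 : (0:ℝ) < k := by exact_mod_cast hk
    field_simp
  have hU : Tendsto (fun k : ℕ => a ((k + 1) ^ 2) / ((k:ℝ) ^ 2) ^ 2) atTop (nhds μ) := by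
    have h1 : Tendsto (fun k : ℕ => a ((k + 1) ^ 2) / (((k:ℝ) + 1) ^ 2) ^ 2) atTop (nhds μ) := by
      have h2 := hsq.comp (tendsto_add_atTop_nat 1)
      apply h2.congr
      intro k
      simp only [Function.comp_apply]
      push_cast
      ring_nf
    have hratio : Tendsto (fun k : ℕ => ((((k:ℝ)+1)/(k:ℝ))^2)^2) atTop (nhds 1) := by
      have h := ((tendsto_natCast_div_add_atTop (1 : ℝ)).inv₀ one_ne_zero).pow 2 |>.pow 2
      simp only [inv_one, one_pow] at h
      apply h.congr
      intro k
      rw [inv_div]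
    have h3 := h1.mul hratio
    rw [mul_one] at h3
    apply h3.congr'
    filter_upwards [eventually_ge_atTop 1] with k hk
    have hk0 : (0:ℝ) < k := by exact_mod_cast hk
    field_simp
  have hLc := hL.comp aux_sqrt_tendsto
  have hUc := hU.comp aux_sqrt_tendsto
  refine tendsto_of_tendsto_of_tendsto_of_le_of_le' hLc hUc ?_ ?_
  · filter_upwards [eventually_ge_atTop 1] with n hn
    have hs1 : 1 ≤ Nat.sqrt n := Nat.le_sqrt.2 (by simpa using hn)
    have hnum : a ((Nat.sqrt n) ^ 2) ≤ a n := ha (Nat.sqrt_le' n)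
    have hden : (n:ℝ) ^ 2 ≤ (((Nat.sqrt n : ℝ) + 1) ^ 2) ^ 2 := by
      have h4 : (n:ℝ) < ((Nat.sqrt n + 1 : ℕ) : ℝ) ^ 2 := by exact_mod_cast Nat.lt_succ_sqrt' n
      push_cast at h4
      have h0n : (0:ℝ) ≤ (n:ℝ) := by positivity
      nlinarith
    simp only [Function.comp_apply]
    exact div_le_div₀ (h0 n) hnum (by positivity) hden
  · filter_upwards [eventually_ge_atTop 1] with n hn
    have hs1 : 1 ≤ Nat.sqrt n := Nat.le_sqrt.2 (by simpa using hn)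
    have hs1R : (1:ℝ) ≤ (Nat.sqrt n : ℝ) := by exact_mod_cast hs1
    have hnum : a n ≤ a ((Nat.sqrt n + 1) ^ 2) := ha (Nat.lt_succ_sqrt' n).le
    have hden : ((Nat.sqrt n : ℝ) ^ 2) ^ 2 ≤ (n:ℝ) ^ 2 := by
      have h4 : ((Nat.sqrt n : ℝ)) ^ 2 ≤ (n:ℝ) := by exact_mod_cast Nat.sqrt_le' n
      nlinarith
    simp only [Function.comp_apply]
    have hn0 : (0:ℝ) < (n:ℝ) ^ 2 := by
      have : (0:ℝ) < (n:ℝ) := by exact_mod_cast hn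
      positivity
    exact div_le_div₀ (h0 _) hnum (by positivity) hden

lemma aux_ae_tendsto_zero {Ω : Type*} [MeasurableSpace Ω] (P : Measure Ω) [IsProbabilityMeasure P]
    (Y : ℕ → Ω → ℝ) (hYm : ∀ k, Measurable (Y k))
    (hbound : ∀ k, ∫⁻ ω, ENNReal.ofReal ((Y k ω) ^ 2) ∂P ≤ ENNReal.ofReal (4 / (k:ℝ) ^ 2)) :
    ∀ᵐ ω ∂P, Tendsto (fun k => Y k ω) atTop (nhds 0) := by
  set F : ℕ → Ω → ENNReal := fun k ω => ENNReal.ofReal ((Y k ω) ^ 2) with hF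
  have hFm : ∀ k, Measurable (F k) := fun k => ((hYm k).pow_const 2).ennreal_ofReal
  have hsummable : Summable (fun k : ℕ => 4 / (k:ℝ) ^ 2) := by
    have h := Real.summable_one_div_nat_pow.2 (by norm_num : 1 < 2)
    simpa [div_eq_mul_inv] using h.mul_left 4
  have htsum_ne_top : (∑' k : ℕ, ENNReal.ofReal (4 / (k:ℝ) ^ 2)) ≠ ⊤ := by
    rw [← ENNReal.ofReal_tsum_of_nonneg (fun k => by positivity) hsummable]
    exact ENNReal.ofReal_ne_top
  have hlint : ∫⁻ ω, (∑' k, F k ω) ∂P ≠ ⊤ := by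
    rw [lintegral_tsum (fun k => (hFm k).aemeasurable)]
    exact ne_top_of_le_ne_top htsum_ne_top (ENNReal.tsum_le_tsum hbound)
  have hae : ∀ᵐ ω ∂P, (∑' k, F k ω) ≠ ⊤ := by
    filter_upwards [ae_lt_top (by exact Measurable.ennreal_tsum hFm) hlint] with ω hω
    exact hω.ne
  filter_upwards [hae] with ω hω
  have htend : Tendsto (fun k => F k ω) atTop (nhds 0) :=
    ENNReal.tendsto_atTop_zero_of_tsum_ne_top hω
  have hsq : Tendsto (fun k => (Y k ω) ^ 2) atTop (nhds 0) := by
    have h2 := (ENNReal.tendsto_toReal (by simp)).comp htend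
    simp only [Function.comp, ENNReal.toReal_zero] at h2
    apply h2.congr
    intro k
    exact ENNReal.toReal_ofReal (by positivity)
  have habs : Tendsto (fun k => Real.sqrt ((Y k ω) ^ 2)) atTop (nhds 0) := by
    have := (Real.continuous_sqrt.tendsto 0).comp hsq
    simpa [Function.comp_def] using this
  apply squeeze_zero_norm (fun k => ?_) habs
  rw [Real.sqrt_sq_eq_abs]
  exact le_of_eq (Real.norm_eq_abs _)

lemma uslln {Ω : Type*} [MeasurableSpace Ω] (P : Measure Ω) [IsProbabilityMeasure P]
    {α : Type*} [MeasurableSpace α] (ζ : ℕ → Ω → α)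
    (hmeas : ∀ i, Measurable (ζ i))
    (hident : ∀ i, P.map (ζ i) = P.map (ζ 0))
    (hindep : iIndepFun ζ P)
    (h : α → α → ℝ) (hh : Measurable fun p : α × α => h p.1 p.2)
    (h01 : ∀ x y, h x y ∈ Set.Icc (0:ℝ) 1) :
    ∀ᵐ ω ∂P, Filter.Tendsto (fun n => (∑ i ∈ Finset.range n, ∑ j ∈ Finset.range n,
        if i = j then 0 else h (ζ i ω) (ζ j ω)) / ((n:ℝ) ^ 2)) atTop
      (nhds (∫ ω, h (ζ 0 ω) (ζ 1 ω) ∂P)) := by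
  set μ : ℝ := ∫ ω, h (ζ 0 ω) (ζ 1 ω) ∂P with hμdef
  have hfm : ∀ i j, Measurable (fun ω => h (ζ i ω) (ζ j ω)) :=
    fun i j => hh.comp ((hmeas i).prodMk (hmeas j))
  have hfint : ∀ i j, Integrable (fun ω => h (ζ i ω) (ζ j ω)) P := by
    intro i j
    refine (integrable_const (1:ℝ)).mono' (hfm i j).aestronglyMeasurable ?_
    refine Filter.Eventually.of_forall fun ω => ?_
    rw [Real.norm_eq_abs, abs_le]
    exact ⟨by linarith [(h01 (ζ i ω) (ζ j ω)).1], (h01 (ζ i ω) (ζ j ω)).2⟩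
  have hμ0 : 0 ≤ μ := integral_nonneg fun ω => (h01 _ _).1
  have hμ1 : μ ≤ 1 := by
    calc μ ≤ ∫ _, (1:ℝ) ∂P := integral_mono (hfint 0 1) (integrable_const 1)
              fun ω => (h01 _ _).2
    _ = 1 := by simp
  have hexp : ∀ i j : ℕ, i ≠ j → ∫ ω, h (ζ i ω) (ζ j ω) ∂P = μ := by
    have hpair : ∀ a b : ℕ, a ≠ b →
        P.map (fun ω => (ζ a ω, ζ b ω)) = (P.map (ζ 0)).prod (P.map (ζ 0)) := by
      intro a b hab
      rw [(indepFun_iff_map_prod_eq_prod_map_map (hmeas a).aemeasurable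
        (hmeas b).aemeasurable).1 (hindep.indepFun hab), hident a, hident b]
    have key : ∀ a b : ℕ, a ≠ b → ∫ ω, h (ζ a ω) (ζ b ω) ∂P
        = ∫ p : α × α, h p.1 p.2 ∂((P.map (ζ 0)).prod (P.map (ζ 0))) := by
      intro a b hab
      rw [← hpair a b hab,
        integral_map ((hmeas a).prodMk (hmeas b)).aemeasurable hh.aestronglyMeasurable]
    intro i j hij
    rw [key i j hij, hμdef, key 0 1 (by norm_num)]
  set G : α × α → ℝ := fun p => h p.1 p.2 - μ with hGdef
  have hGm : Measurable G := hh.sub measurable_const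
  set t : ℕ → ℕ → Ω → ℝ := fun i j ω => if i = j then 0 else G (ζ i ω, ζ j ω) with htdef
  have htm : ∀ i j, Measurable (t i j) := by
    intro i j
    by_cases hij : i = j
    · simpa [htdef, hij] using measurable_const
    · simp only [htdef, hij, if_false]; exact hGm.comp ((hmeas i).prodMk (hmeas j))
  have htb : ∀ i j ω, |t i j ω| ≤ 1 := by
    intro i j ω
    by_cases hij : i = j
    · simp [htdef, hij]
    · simp only [htdef, hij, if_false]
      rw [abs_le]
      have h1 := (h01 (ζ i ω) (ζ j ω)).1
      have h2 := (h01 (ζ i ω) (ζ j ω)).2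
      constructor <;> simp [hGdef] <;> linarith
  have htint : ∀ i j, Integrable (t i j) P := by
    intro i j
    refine (integrable_const (1:ℝ)).mono' (htm i j).aestronglyMeasurable ?_
    exact Filter.Eventually.of_forall fun ω => by rw [Real.norm_eq_abs]; exact htb i j ω
  have htexp : ∀ i j, ∫ ω, t i j ω ∂P = 0 := by
    intro i j
    by_cases hij : i = j
    · simp [htdef, hij]
    · simp only [htdef, hij, if_false, hGdef]
      rw [integral_sub (hfint i j) (integrable_const μ), hexp i j hij]
      simp
  have htprodint : ∀ i j k l, Integrable (fun ω => t i j ω * t k l ω) P := by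
    intro i j k l
    refine (integrable_const (1:ℝ)).mono' ((htm i j).mul (htm k l)).aestronglyMeasurable ?_
    refine Filter.Eventually.of_forall fun ω => ?_
    rw [Real.norm_eq_abs, abs_mul]
    calc |t i j ω| * |t k l ω| ≤ 1 * 1 :=
      mul_le_mul (htb i j ω) (htb k l ω) (abs_nonneg _) zero_le_one
    _ = 1 := one_mul 1
  have htcov : ∀ i j k l : ℕ, i ≠ k → i ≠ l → j ≠ k → j ≠ l →
      ∫ ω, t i j ω * t k l ω ∂P = 0 := by
    intro i j k l hik hil hjk hjl
    by_cases hij : i = j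
    · simp [htdef, hij]
    by_cases hkl : k = l
    · simp [htdef, hkl]
    have hind : IndepFun (t i j) (t k l) P := by
      have base := hindep.indepFun_prodMk_prodMk hmeas i j k l hik hil hjk hjl
      have hcomp := base.comp hGm hGm
      have e1 : t i j = G ∘ (fun ω => (ζ i ω, ζ j ω)) := by
        funext ω; simp [htdef, hij]
      have e2 : t k l = G ∘ (fun ω => (ζ k ω, ζ l ω)) := by
        funext ω; simp [htdef, hkl]
      rw [e1, e2]; exact hcomp
    calc ∫ ω, t i j ω * t k l ω ∂P = ∫ ω, (t i j * t k l) ω ∂P := rfl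
    _ = (∫ ω, t i j ω ∂P) * ∫ ω, t k l ω ∂P :=
        hind.integral_mul_eq_mul_integral (htint i j).aestronglyMeasurable (htint k l).aestronglyMeasurable
    _ = 0 := by rw [htexp, htexp, mul_zero]
  set Sn : ℕ → Ω → ℝ := fun n ω => ∑ i ∈ Finset.range n, ∑ j ∈ Finset.range n, t i j ω
    with hSdef
  have hSm : ∀ n, Measurable (Sn n) := by
    intro n
    apply Finset.measurable_sum
    intro i _
    exact Finset.measurable_sum _ fun j _ => htm i j
  have hS2 : ∀ n : ℕ, ∫ ω, (Sn n ω) ^ 2 ∂P ≤ 4 * (n:ℝ) ^ 3 := by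
    intro n
    set Q := (Finset.range n) ×ˢ (Finset.range n) with hQ
    have hrw : ∀ ω, (Sn n ω) ^ 2 = ∑ p ∈ Q, ∑ q ∈ Q, t p.1 p.2 ω * t q.1 q.2 ω := by
      intro ω
      rw [hSdef]
      simp only
      rw [← Finset.sum_product' (s := Finset.range n) (t := Finset.range n)
        (f := fun i j => t i j ω), sq, Finset.sum_mul_sum]
    have hint1 : ∀ p : ℕ × ℕ, p ∈ Q →
        Integrable (fun ω => ∑ q ∈ Q, t p.1 p.2 ω * t q.1 q.2 ω) P :=
      fun p _ => integrable_finset_sum _ fun q _ => htprodint _ _ _ _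
    have hinnerFst : ∀ m : ℕ, ∑ q ∈ Q, (if m = q.1 then (1:ℝ) else 0) ≤ (n:ℝ) := by
      intro m
      rw [hQ, Finset.sum_product]
      calc ∑ k ∈ Finset.range n, ∑ _l ∈ Finset.range n, (if m = k then (1:ℝ) else 0)
          = ∑ k ∈ Finset.range n, (n:ℝ) * (if m = k then (1:ℝ) else 0) := by
            refine Finset.sum_congr rfl fun k _ => ?_
            rw [Finset.sum_const, Finset.card_range, nsmul_eq_mul]
      _ = (n:ℝ) * ∑ k ∈ Finset.range n, (if m = k then (1:ℝ) else 0) := by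
            rw [Finset.mul_sum]
      _ ≤ (n:ℝ) * 1 := by
            refine mul_le_mul_of_nonneg_left ?_ (by positivity)
            rw [Finset.sum_ite_eq]
            split_ifs <;> norm_num
      _ = (n:ℝ) := mul_one _
    have hinnerSnd : ∀ m : ℕ, ∑ q ∈ Q, (if m = q.2 then (1:ℝ) else 0) ≤ (n:ℝ) := by
      intro m
      rw [hQ, Finset.sum_product_right]
      calc ∑ l ∈ Finset.range n, ∑ _k ∈ Finset.range n, (if m = l then (1:ℝ) else 0)
          = ∑ l ∈ Finset.range n, (n:ℝ) * (if m = l then (1:ℝ) else 0) := by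
            refine Finset.sum_congr rfl fun l _ => ?_
            rw [Finset.sum_const, Finset.card_range, nsmul_eq_mul]
      _ = (n:ℝ) * ∑ l ∈ Finset.range n, (if m = l then (1:ℝ) else 0) := by
            rw [Finset.mul_sum]
      _ ≤ (n:ℝ) * 1 := by
            refine mul_le_mul_of_nonneg_left ?_ (by positivity)
            rw [Finset.sum_ite_eq]
            split_ifs <;> norm_num
      _ = (n:ℝ) := mul_one _
    have hcard : (Q.card : ℝ) = (n:ℝ) ^ 2 := by
      rw [hQ, Finset.card_product, Finset.card_range]
      push_cast; ring
    calc ∫ ω, (Sn n ω) ^ 2 ∂P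
        = ∑ p ∈ Q, ∑ q ∈ Q, ∫ ω, t p.1 p.2 ω * t q.1 q.2 ω ∂P := by
          rw [integral_congr_ae (Filter.Eventually.of_forall hrw), integral_finset_sum _ hint1]
          exact Finset.sum_congr rfl fun p _ =>
            integral_finset_sum _ fun q _ => htprodint _ _ _ _
    _ ≤ ∑ p ∈ Q, ∑ q ∈ Q, ((if p.1 = q.1 then (1:ℝ) else 0)
          + (if p.1 = q.2 then (1:ℝ) else 0) + (if p.2 = q.1 then (1:ℝ) else 0)
          + (if p.2 = q.2 then (1:ℝ) else 0)) := by
          refine Finset.sum_le_sum fun p _ => Finset.sum_le_sum fun q _ => ?_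
          by_cases hc : p.1 = q.1 ∨ p.1 = q.2 ∨ p.2 = q.1 ∨ p.2 = q.2
          · have hb1 : ∫ ω, t p.1 p.2 ω * t q.1 q.2 ω ∂P ≤ 1 := by
              calc ∫ ω, t p.1 p.2 ω * t q.1 q.2 ω ∂P ≤ ∫ _, (1:ℝ) ∂P := by
                    refine integral_mono (htprodint _ _ _ _) (integrable_const 1) fun ω => ?_
                    calc t p.1 p.2 ω * t q.1 q.2 ω ≤ |t p.1 p.2 ω * t q.1 q.2 ω| :=
                          le_abs_self _
                    _ = |t p.1 p.2 ω| * |t q.1 q.2 ω| := abs_mul _ _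
                    _ ≤ 1 * 1 := mul_le_mul (htb _ _ _) (htb _ _ _) (abs_nonneg _) zero_le_one
                    _ = 1 := one_mul 1
              _ = 1 := by simp
            refine hb1.trans ?_
            rcases hc with hcc | hcc | hcc | hcc <;> rw [if_pos hcc] <;> split_ifs <;> norm_num
          · push_neg at hc
            rw [htcov p.1 p.2 q.1 q.2 hc.1 hc.2.1 hc.2.2.1 hc.2.2.2]
            rw [if_neg hc.1, if_neg hc.2.1, if_neg hc.2.2.1, if_neg hc.2.2.2]
            norm_num
    _ ≤ ∑ _p ∈ Q, (4 * (n:ℝ)) := by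
          refine Finset.sum_le_sum fun p _ => ?_
          rw [Finset.sum_add_distrib, Finset.sum_add_distrib, Finset.sum_add_distrib]
          have h1 := hinnerFst p.1
          have h2 := hinnerSnd p.1
          have h3 := hinnerFst p.2
          have h4 := hinnerSnd p.2
          linarith
    _ = 4 * (n:ℝ) ^ 3 := by
          rw [Finset.sum_const, nsmul_eq_mul, hcard]; ring
  -- integrability and boundedness of Sn
  have hSb : ∀ n ω, |Sn n ω| ≤ (n:ℝ)^2 := by
    intro n ω
    calc |Sn n ω| ≤ ∑ i ∈ Finset.range n, |∑ j ∈ Finset.range n, t i j ω| :=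
        Finset.abs_sum_le_sum_abs _ _
    _ ≤ ∑ _i ∈ Finset.range n, (n:ℝ) := by
        refine Finset.sum_le_sum fun i _ => ?_
        calc |∑ j ∈ Finset.range n, t i j ω| ≤ ∑ j ∈ Finset.range n, |t i j ω| :=
            Finset.abs_sum_le_sum_abs _ _
        _ ≤ ∑ _j ∈ Finset.range n, (1:ℝ) := Finset.sum_le_sum fun j _ => htb i j ω
        _ = (n:ℝ) := by simp
    _ = (n:ℝ)^2 := by rw [Finset.sum_const, Finset.card_range, nsmul_eq_mul]; ring
  have hS2int : ∀ n, Integrable (fun ω => (Sn n ω)^2) P := by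
    intro n
    refine (integrable_const (((n:ℝ)^2)^2)).mono' ((hSm n).pow_const 2).aestronglyMeasurable ?_
    refine Filter.Eventually.of_forall fun ω => ?_
    rw [Real.norm_eq_abs, abs_pow]
    exact pow_le_pow_left₀ (abs_nonneg _) (hSb n ω) 2
  set Y : ℕ → Ω → ℝ := fun k ω => Sn (k^2) ω / ((k:ℝ)^2)^2 with hYdef
  have hYm : ∀ k, Measurable (Y k) := fun k => (hSm _).div_const _
  have hYb : ∀ k, ∫⁻ ω, ENNReal.ofReal ((Y k ω)^2) ∂P ≤ ENNReal.ofReal (4/(k:ℝ)^2) := by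
    intro k
    have hintY : Integrable (fun ω => (Y k ω)^2) P := by
      have := (hS2int (k^2)).div_const ((((k:ℝ)^2)^2)^2)
      apply this.congr
      refine Filter.Eventually.of_forall fun ω => ?_
      rw [hYdef]
      simp only
      rw [div_pow]
    rw [← ofReal_integral_eq_lintegral_ofReal hintY
      (Filter.Eventually.of_forall fun ω => by positivity)]
    apply ENNReal.ofReal_le_ofReal
    rcases Nat.eq_zero_or_pos k with hk | hk
    · subst hk
      have hz : ∀ ω, (Y 0 ω)^2 = 0 := by
        intro ω
        rw [hYdef]
        norm_num
      rw [integral_congr_ae (Filter.Eventually.of_forall hz)]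
      simp
    · have hk0 : (0:ℝ) < (k:ℝ) := by exact_mod_cast hk
      have heq : ∀ ω, (Y k ω)^2 = (Sn (k^2) ω)^2 / (k:ℝ)^8 := by
        intro ω
        rw [hYdef]
        simp only
        rw [div_pow]
        ring_nf
      calc ∫ ω, (Y k ω)^2 ∂P = (∫ ω, (Sn (k^2) ω)^2 ∂P) / (k:ℝ)^8 := by
            rw [integral_congr_ae (Filter.Eventually.of_forall heq), integral_div]
      _ ≤ (4 * (((k^2:ℕ)):ℝ)^3)/(k:ℝ)^8 := by
            gcongr
            exact hS2 (k^2)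
      _ = 4/(k:ℝ)^2 := by
            push_cast
            field_simp
  have haezero := aux_ae_tendsto_zero P Y hYm hYb
  have hC : ∀ n : ℕ, (∑ i ∈ Finset.range n, ∑ j ∈ Finset.range n,
      if i = j then (0:ℝ) else μ) = (n:ℝ) * ((n:ℝ)*μ - μ) := by
    intro n
    have hin : ∀ i ∈ Finset.range n,
        (∑ j ∈ Finset.range n, if i = j then (0:ℝ) else μ) = (n:ℝ)*μ - μ := by
      intro i hi
      have hsplit : ∀ j, (if i = j then (0:ℝ) else μ) = μ - (if i = j then μ else 0) := by
        intro j
        split_ifs <;> ring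
      simp_rw [hsplit]
      rw [Finset.sum_sub_distrib, Finset.sum_const, Finset.card_range, Finset.sum_ite_eq,
        if_pos hi, nsmul_eq_mul]
    rw [Finset.sum_congr rfl hin, Finset.sum_const, Finset.card_range, nsmul_eq_mul]
  filter_upwards [haezero] with ω hω
  set A : ℕ → ℝ := fun n => ∑ i ∈ Finset.range n, ∑ j ∈ Finset.range n,
      if i = j then 0 else h (ζ i ω) (ζ j ω) with hAdef
  have hterm : ∀ i j, (if i = j then (0:ℝ) else h (ζ i ω) (ζ j ω))
      = t i j ω + (if i = j then (0:ℝ) else μ) := by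
    intro i j
    by_cases hij : i = j <;> simp [htdef, hGdef, hij]
  have hAS : ∀ n, A n = Sn n ω + (n:ℝ)*((n:ℝ)*μ - μ) := by
    intro n
    calc A n = ∑ i ∈ Finset.range n, ∑ j ∈ Finset.range n,
        (t i j ω + (if i = j then (0:ℝ) else μ)) := by
          rw [hAdef]
          exact Finset.sum_congr rfl fun i _ => Finset.sum_congr rfl fun j _ => hterm i j
    _ = Sn n ω + ∑ i ∈ Finset.range n, ∑ j ∈ Finset.range n,
        (if i = j then (0:ℝ) else μ) := by
          rw [hSdef]
          simp only [Finset.sum_add_distrib]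
    _ = Sn n ω + (n:ℝ)*((n:ℝ)*μ - μ) := by rw [hC n]
  have hA0 : ∀ n, 0 ≤ A n := by
    intro n
    rw [hAdef]
    refine Finset.sum_nonneg fun i _ => Finset.sum_nonneg fun j _ => ?_
    by_cases hij : i = j <;> simp [hij]
    exact (h01 _ _).1
  have hmono : Monotone A := by
    intro m n hmn
    rw [hAdef]
    simp only
    rw [← Finset.sum_product' (s := Finset.range m) (t := Finset.range m)
      (f := fun i j => if i = j then (0:ℝ) else h (ζ i ω) (ζ j ω)),
      ← Finset.sum_product' (s := Finset.range n) (t := Finset.range n)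
      (f := fun i j => if i = j then (0:ℝ) else h (ζ i ω) (ζ j ω))]
    refine Finset.sum_le_sum_of_subset_of_nonneg
      (Finset.product_subset_product (Finset.range_subset_range.2 hmn) (Finset.range_subset_range.2 hmn))
      fun p _ _ => ?_
    by_cases hp : p.1 = p.2 <;> simp [hp]
    exact (h01 _ _).1
  apply aux_sandwich A hmono hA0 μ
  have hinv : Tendsto (fun k : ℕ => ((k:ℝ)^2)⁻¹) atTop (nhds 0) := by
    apply Filter.Tendsto.inv_tendsto_atTop
    exact (tendsto_pow_atTop two_ne_zero).comp tendsto_natCast_atTop_atTop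
  have hconst : Tendsto (fun k : ℕ => ((k:ℝ)^2*((k:ℝ)^2*μ - μ))/((k:ℝ)^2)^2) atTop (nhds μ) := by
    have h2 : Tendsto (fun k : ℕ => μ - μ * ((k:ℝ)^2)⁻¹) atTop (nhds μ) := by
      have h3 := (tendsto_const_nhds : Tendsto (fun _ : ℕ => μ) atTop (nhds μ)).sub (hinv.const_mul μ)
      simpa using h3
    apply h2.congr'
    filter_upwards [eventually_ge_atTop 1] with k hk
    have hk0 : (0:ℝ) < k := by exact_mod_cast hk
    field_simp
  have hsum := hω.add hconst
  rw [zero_add] at hsum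
  apply hsum.congr
  intro k
  rw [hAS (k^2)]
  push_cast
  rw [add_div]

lemma aux_div_div (a b c : ℝ) (hc : c ≠ 0) : (a/c)/(b/c) = a/b := by
  rcases eq_or_ne b 0 with hb | hb
  · simp [hb]
  · field_simp

/-- **Convergence of the time-dependent concordance (Antolini's C).**
Work on a probability space `(Ω, P)`. `ζ i = (Zᵢ, Tᵢ, Dᵢ)` is an i.i.d. sequence of
(covariate, event time, censoring time) triples, with `D₁` independent of `(Z₁, T₁)`,
`S` a fixed measurable predicted survival curve with values in `[0,1]`, and `Tmax > 0`
the truncation time.  Assuming `P(T₁ < T₂, T₁ < Tmax, T₁ < min(D₁,D₂)) > 0`, the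
time-dependent concordance `Ĉₙ` converges almost surely to
`P(S(T₁;Z₁) < S(T₁;Z₂), T₁ < T₂, T₁ < Tmax, T₁ < min(D₁,D₂)) /
 P(T₁ < T₂, T₁ < Tmax, T₁ < min(D₁,D₂))`. -/
theorem stmt_0 {Ω : Type*} [MeasurableSpace Ω] (P : Measure Ω) [IsProbabilityMeasure P]
    {E : Type*} [MeasurableSpace E]
    (S : ℝ → E → ℝ) (hSmeas : Measurable fun p : ℝ × E => S p.1 p.2)
    (hS01 : ∀ t z, S t z ∈ Set.Icc (0 : ℝ) 1)
    (Tmax : ℝ) (hTmax : 0 < Tmax)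
    (ζ : ℕ → Ω → E × ℝ × ℝ)
    (hmeas : ∀ i, Measurable (ζ i))
    (hident : ∀ i, P.map (ζ i) = P.map (ζ 0))
    (hindep : iIndepFun ζ P)
    (hTnonneg : ∀ i ω, 0 ≤ (ζ i ω).2.1) (hDnonneg : ∀ i ω, 0 ≤ (ζ i ω).2.2)
    (hDindep : IndepFun (fun ω => ((ζ 0 ω).1, (ζ 0 ω).2.1)) (fun ω => (ζ 0 ω).2.2) P)
    (hpos : 0 < P {ω | (ζ 0 ω).2.1 < (ζ 1 ω).2.1 ∧ (ζ 0 ω).2.1 < Tmax ∧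
        (ζ 0 ω).2.1 < min ((ζ 0 ω).2.2) ((ζ 1 ω).2.2)}) :
    ∀ᵐ ω ∂P, Tendsto (fun n =>
        (∑ i ∈ Finset.range n, ∑ j ∈ Finset.range n,
          if i ≠ j ∧ (ζ i ω).2.1 < (ζ i ω).2.2 ∧
              S ((ζ i ω).2.1) ((ζ i ω).1) < S ((ζ i ω).2.1) ((ζ j ω).1) ∧
              (ζ i ω).2.1 < min ((ζ j ω).2.1) ((ζ j ω).2.2) ∧ (ζ i ω).2.1 < Tmax
            then (1 : ℝ) else 0) /
        (∑ i ∈ Finset.range n, ∑ j ∈ Finset.range n,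
          if i ≠ j ∧ (ζ i ω).2.1 < (ζ i ω).2.2 ∧
              (ζ i ω).2.1 < min ((ζ j ω).2.1) ((ζ j ω).2.2) ∧ (ζ i ω).2.1 < Tmax
            then (1 : ℝ) else 0))
      atTop (nhds
        ((P {ω | S ((ζ 0 ω).2.1) ((ζ 0 ω).1) < S ((ζ 0 ω).2.1) ((ζ 1 ω).1) ∧
              (ζ 0 ω).2.1 < (ζ 1 ω).2.1 ∧ (ζ 0 ω).2.1 < Tmax ∧
              (ζ 0 ω).2.1 < min ((ζ 0 ω).2.2) ((ζ 1 ω).2.2)}).toReal /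
         (P {ω | (ζ 0 ω).2.1 < (ζ 1 ω).2.1 ∧ (ζ 0 ω).2.1 < Tmax ∧
              (ζ 0 ω).2.1 < min ((ζ 0 ω).2.2) ((ζ 1 ω).2.2)}).toReal)) := by
  classical
  -- measurability of coordinate maps on pairs
  have m1 : Measurable fun p : (E × ℝ × ℝ) × (E × ℝ × ℝ) => p.1.2.1 :=
    measurable_fst.snd.fst
  have m2 : Measurable fun p : (E × ℝ × ℝ) × (E × ℝ × ℝ) => p.1.2.2 :=
    measurable_fst.snd.snd
  have m3 : Measurable fun p : (E × ℝ × ℝ) × (E × ℝ × ℝ) => S p.1.2.1 p.1.1 :=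
    hSmeas.comp (m1.prodMk measurable_fst.fst)
  have m4 : Measurable fun p : (E × ℝ × ℝ) × (E × ℝ × ℝ) => S p.1.2.1 p.2.1 :=
    hSmeas.comp (m1.prodMk measurable_snd.fst)
  have m5 : Measurable fun p : (E × ℝ × ℝ) × (E × ℝ × ℝ) => min p.2.2.1 p.2.2.2 :=
    measurable_snd.snd.fst.min measurable_snd.snd.snd
  -- the kernels
  set hnum : (E × ℝ × ℝ) → (E × ℝ × ℝ) → ℝ := fun x y =>
    if x.2.1 < x.2.2 ∧ S x.2.1 x.1 < S x.2.1 y.1 ∧ x.2.1 < min y.2.1 y.2.2 ∧ x.2.1 < Tmax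
    then 1 else 0 with hnumdef
  set hden : (E × ℝ × ℝ) → (E × ℝ × ℝ) → ℝ := fun x y =>
    if x.2.1 < x.2.2 ∧ x.2.1 < min y.2.1 y.2.2 ∧ x.2.1 < Tmax then 1 else 0 with hdendef
  have hsetnum : MeasurableSet {p : (E × ℝ × ℝ) × (E × ℝ × ℝ) |
      p.1.2.1 < p.1.2.2 ∧ S p.1.2.1 p.1.1 < S p.1.2.1 p.2.1 ∧
      p.1.2.1 < min p.2.2.1 p.2.2.2 ∧ p.1.2.1 < Tmax} :=
    (measurableSet_lt m1 m2).inter ((measurableSet_lt m3 m4).inter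
      ((measurableSet_lt m1 m5).inter (measurableSet_lt m1 measurable_const)))
  have hsetden : MeasurableSet {p : (E × ℝ × ℝ) × (E × ℝ × ℝ) |
      p.1.2.1 < p.1.2.2 ∧ p.1.2.1 < min p.2.2.1 p.2.2.2 ∧ p.1.2.1 < Tmax} :=
    (measurableSet_lt m1 m2).inter
      ((measurableSet_lt m1 m5).inter (measurableSet_lt m1 measurable_const))
  have hnummeas : Measurable fun p : (E × ℝ × ℝ) × (E × ℝ × ℝ) => hnum p.1 p.2 := by
    rw [hnumdef]
    exact Measurable.ite hsetnum measurable_const measurable_const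
  have hdenmeas : Measurable fun p : (E × ℝ × ℝ) × (E × ℝ × ℝ) => hden p.1 p.2 := by
    rw [hdendef]
    exact Measurable.ite hsetden measurable_const measurable_const
  have hnum01 : ∀ x y, hnum x y ∈ Set.Icc (0:ℝ) 1 := by
    intro x y
    rw [hnumdef]
    simp only
    split_ifs <;> norm_num
  have hden01 : ∀ x y, hden x y ∈ Set.Icc (0:ℝ) 1 := by
    intro x y
    rw [hdendef]
    simp only
    split_ifs <;> norm_num
  have hNae := uslln P ζ hmeas hident hindep hnum hnummeas hnum01
  have hDae := uslln P ζ hmeas hident hindep hden hdenmeas hden01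
  -- identify the limits
  have hκ : Measurable (fun ω => (ζ 0 ω, ζ 1 ω)) := (hmeas 0).prodMk (hmeas 1)
  have hμnum : ∫ ω, hnum (ζ 0 ω) (ζ 1 ω) ∂P =
      (P {ω | S ((ζ 0 ω).2.1) ((ζ 0 ω).1) < S ((ζ 0 ω).2.1) ((ζ 1 ω).1) ∧
        (ζ 0 ω).2.1 < (ζ 1 ω).2.1 ∧ (ζ 0 ω).2.1 < Tmax ∧
        (ζ 0 ω).2.1 < min ((ζ 0 ω).2.2) ((ζ 1 ω).2.2)}).toReal := by
    have heq : (fun ω => hnum (ζ 0 ω) (ζ 1 ω)) = Set.indicator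
        ((fun ω => (ζ 0 ω, ζ 1 ω)) ⁻¹' {p : (E × ℝ × ℝ) × (E × ℝ × ℝ) |
          p.1.2.1 < p.1.2.2 ∧ S p.1.2.1 p.1.1 < S p.1.2.1 p.2.1 ∧
          p.1.2.1 < min p.2.2.1 p.2.2.2 ∧ p.1.2.1 < Tmax}) (1 : Ω → ℝ) := by
      funext ω
      rw [Set.indicator_apply, hnumdef]
      beta_reduce
      exact if_congr Iff.rfl rfl rfl
    rw [heq, integral_indicator_one (hκ hsetnum)]
    congr 1
    ext ω
    simp only [Set.mem_preimage, Set.mem_setOf_eq, lt_min_iff]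
    tauto
  have hμden : ∫ ω, hden (ζ 0 ω) (ζ 1 ω) ∂P =
      (P {ω | (ζ 0 ω).2.1 < (ζ 1 ω).2.1 ∧ (ζ 0 ω).2.1 < Tmax ∧
        (ζ 0 ω).2.1 < min ((ζ 0 ω).2.2) ((ζ 1 ω).2.2)}).toReal := by
    have heq : (fun ω => hden (ζ 0 ω) (ζ 1 ω)) = Set.indicator
        ((fun ω => (ζ 0 ω, ζ 1 ω)) ⁻¹' {p : (E × ℝ × ℝ) × (E × ℝ × ℝ) |
          p.1.2.1 < p.1.2.2 ∧ p.1.2.1 < min p.2.2.1 p.2.2.2 ∧ p.1.2.1 < Tmax}) (1 : Ω → ℝ) := by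
      funext ω
      rw [Set.indicator_apply, hdendef]
      beta_reduce
      exact if_congr Iff.rfl rfl rfl
    rw [heq, integral_indicator_one (hκ hsetden)]
    congr 1
    ext ω
    simp only [Set.mem_preimage, Set.mem_setOf_eq, lt_min_iff]
    tauto
  have hbne : ∫ ω, hden (ζ 0 ω) (ζ 1 ω) ∂P ≠ 0 := by
    rw [hμden]
    exact (ENNReal.toReal_pos hpos.ne' (measure_ne_top _ _)).ne'
  rw [← hμnum, ← hμden]
  filter_upwards [hNae, hDae] with ω hN hD
  have hdiv := hN.div hD hbne
  apply hdiv.congr'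
  filter_upwards [eventually_ge_atTop 1] with n hn
  simp only [Pi.div_apply]
  have hn0 : ((n:ℝ)^2) ≠ 0 := by
    have : (0:ℝ) < (n:ℝ) := by exact_mod_cast hn
    positivity
  rw [aux_div_div _ _ _ hn0]
  congr 1
  · refine Finset.sum_congr rfl fun i _ => Finset.sum_congr rfl fun j _ => ?_
    by_cases hij : i = j
    · simp [hij]
    · simp [hij, hnumdef]
  · refine Finset.sum_congr rfl fun i _ => Finset.sum_congr rfl fun j _ => ?_
    by_cases hij : i = j
    · simp [hij]
    · simp [hij, hdendef]
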